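/- For every k ∈ {1, …, K−1}: R(k,1) ≥ R(k+1,1), Q(k,1) ≤ Q(k+1,1), and B(k,1) ≤ B(k+1,1). -/

import Mathlib

/-- monotonicity in `k` of `R(·,1)`, `Q(·,1)` and `B(·,1)`:
for `k ∈ {1, …, K−1}`, `R(k+1,1) ≤ R(k,1)`, `Q(k,1) ≤ Q(k+1,1)` and
`B(k,1) ≤ B(k+1,1)`. Costs are indexed by `{1, …, K}`. -/
theorem QRB_monotone_in_k
    (K : ℕ) (hK : 2 ≤ K) (c π : ℕ → ℝ) (Q R B : ℕ → ℝ → ℝ)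
    (hc : ∀ t ∈ Finset.Icc 1 K, 0 < c t)
    (hcmono : ∀ j ∈ Finset.Icc 1 (K - 1), c j < c (j + 1))
    (hπpos : ∀ t ∈ Finset.Icc 1 K, 0 < π t)
    (hπsum : ∑ t ∈ Finset.Icc 1 K, π t = 1)
    (hQ : ∀ k ∈ Finset.Icc 1 K, ∀ x ∈ Set.Ioc (0 : ℝ) 1,
      Q k x = (∑ t ∈ Finset.Icc 1 k, π t * c t)
        + ∑ t ∈ Finset.Icc (k + 1) K, π t * Real.sqrt (c t * c k / x))
    (hR : ∀ k ∈ Finset.Icc 1 K, ∀ x ∈ Set.Ioc (0 : ℝ) 1,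
      R k x = 2 * ((∑ t ∈ Finset.Icc 1 k, π t * c t * x / c k)
        + ∑ t ∈ Finset.Icc (k + 1) K, π t))
    (hB : ∀ k ∈ Finset.Icc 1 K, ∀ x ∈ Set.Ioc (0 : ℝ) 1,
      B k x = Q k x / R k x) :
    ∀ k ∈ Finset.Icc 1 (K - 1),
      R (k + 1) 1 ≤ R k 1 ∧ Q k 1 ≤ Q (k + 1) 1 ∧ B k 1 ≤ B (k + 1) 1 := by
  intro k hk
  simp only [Finset.mem_Icc] at hk
  obtain ⟨hk1, hk2⟩ := hk
  have hk1K : k + 1 ≤ K := by omega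
  have hkK : k ≤ K := by omega
  have hkm : k ∈ Finset.Icc 1 K := by simp; omega
  have hk1m : k + 1 ∈ Finset.Icc 1 K := by simp; omega
  have h1 : (1:ℝ) ∈ Set.Ioc (0:ℝ) 1 := by norm_num
  have hck : 0 < c k := hc k hkm
  have hck1 : 0 < c (k+1) := hc (k+1) hk1m
  have hckk : c k < c (k+1) := hcmono k (by simp; omega)
  have split2 : ∀ f : ℕ → ℝ, ∑ t ∈ Finset.Icc (k+1) K, f t
      = f (k+1) + ∑ t ∈ Finset.Icc (k+2) K, f t := by
    intro f
    rw [Finset.Icc_eq_cons_Ioc hk1K, Finset.sum_cons, ← Finset.Icc_add_one_left_eq_Ioc]; rfl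
  have split1 : ∀ f : ℕ → ℝ, ∑ t ∈ Finset.Icc 1 (k+1), f t
      = ∑ t ∈ Finset.Icc 1 k, f t + f (k+1) := fun f =>
    Finset.sum_Icc_succ_top (by omega) f
  have hQk : Q k 1 = (∑ t ∈ Finset.Icc 1 k, π t * c t)
      + (π (k+1) * Real.sqrt (c (k+1) * c k)
        + ∑ t ∈ Finset.Icc (k+2) K, π t * Real.sqrt (c t * c k)) := by
    rw [hQ k hkm 1 h1, split2]; simp
  have hQk1 : Q (k+1) 1 = ((∑ t ∈ Finset.Icc 1 k, π t * c t) + π (k+1) * c (k+1))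
      + ∑ t ∈ Finset.Icc (k+2) K, π t * Real.sqrt (c t * c (k+1)) := by
    rw [hQ (k+1) hk1m 1 h1, split1]
    simp
  have hQQ : Q k 1 ≤ Q (k+1) 1 := by
    rw [hQk, hQk1]
    have h1' : π (k+1) * Real.sqrt (c (k+1) * c k) ≤ π (k+1) * c (k+1) := by
      apply mul_le_mul_of_nonneg_left _ (hπpos (k+1) hk1m).le
      calc Real.sqrt (c (k+1) * c k) ≤ Real.sqrt (c (k+1) * c (k+1)) := by
            apply Real.sqrt_le_sqrt
            exact mul_le_mul_of_nonneg_left hckk.le hck1.le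
        _ = c (k+1) := Real.sqrt_mul_self hck1.le
    have h2' : ∑ t ∈ Finset.Icc (k+2) K, π t * Real.sqrt (c t * c k)
        ≤ ∑ t ∈ Finset.Icc (k+2) K, π t * Real.sqrt (c t * c (k+1)) := by
      apply Finset.sum_le_sum
      intro t ht
      simp only [Finset.mem_Icc] at ht
      have hct : 0 < c t := hc t (by simp; omega)
      have hπt : 0 < π t := hπpos t (by simp; omega)
      apply mul_le_mul_of_nonneg_left _ hπt.le
      apply Real.sqrt_le_sqrt
      exact mul_le_mul_of_nonneg_left hckk.le hct.le
    linarith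
  have hRk : R k 1 = 2 * ((∑ t ∈ Finset.Icc 1 k, π t * c t / c k)
      + (π (k+1) + ∑ t ∈ Finset.Icc (k+2) K, π t)) := by
    rw [hR k hkm 1 h1, split2]; simp
  have hRk1 : R (k+1) 1 = 2 * (((∑ t ∈ Finset.Icc 1 k, π t * c t / c (k+1)) + π (k+1))
      + ∑ t ∈ Finset.Icc (k+2) K, π t) := by
    rw [hR (k+1) hk1m 1 h1, split1]
    simp only [mul_one]
    rw [mul_div_assoc (π (k+1)), div_self hck1.ne', mul_one]
  have hRR : R (k+1) 1 ≤ R k 1 := by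
    rw [hRk, hRk1]
    have h3' : ∑ t ∈ Finset.Icc 1 k, π t * c t / c (k+1)
        ≤ ∑ t ∈ Finset.Icc 1 k, π t * c t / c k := by
      apply Finset.sum_le_sum
      intro t ht
      simp only [Finset.mem_Icc] at ht
      have hct : 0 < c t := hc t (by simp; omega)
      have hπt : 0 < π t := hπpos t (by simp; omega)
      exact div_le_div_of_nonneg_left (by positivity) hck hckk.le
    linarith
  refine ⟨hRR, hQQ, ?_⟩
  have hQpos : 0 < Q k 1 := by
    rw [hQk]
    have hs1 : 0 < ∑ t ∈ Finset.Icc 1 k, π t * c t := by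
      apply Finset.sum_pos _ (by simp; omega)
      intro t ht
      simp only [Finset.mem_Icc] at ht
      exact mul_pos (hπpos t (by simp; omega)) (hc t (by simp; omega))
    have hs2 : 0 ≤ π (k+1) * Real.sqrt (c (k+1) * c k) :=
      mul_nonneg (hπpos (k+1) hk1m).le (Real.sqrt_nonneg _)
    have hs3 : 0 ≤ ∑ t ∈ Finset.Icc (k+2) K, π t * Real.sqrt (c t * c k) := by
      apply Finset.sum_nonneg
      intro t ht
      simp only [Finset.mem_Icc] at ht
      exact mul_nonneg (hπpos t (by simp; omega)).le (Real.sqrt_nonneg _)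
    linarith
  have hRpos : 0 < R (k+1) 1 := by
    rw [hRk1]
    have hs1 : 0 < ∑ t ∈ Finset.Icc 1 k, π t * c t / c (k+1) := by
      apply Finset.sum_pos _ (by simp; omega)
      intro t ht
      simp only [Finset.mem_Icc] at ht
      exact div_pos (mul_pos (hπpos t (by simp; omega)) (hc t (by simp; omega))) hck1
    have hs2 : 0 < π (k+1) := hπpos (k+1) hk1m
    have hs3 : 0 ≤ ∑ t ∈ Finset.Icc (k+2) K, π t := by
      apply Finset.sum_nonneg
      intro t ht
      simp only [Finset.mem_Icc] at ht
      exact (hπpos t (by simp; omega)).le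
    linarith
  rw [hB k hkm 1 h1, hB (k+1) hk1m 1 h1]
  exact div_le_div₀ (by linarith) hQQ hRpos hRR
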